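/- Density of the filtered calibration sample in the mixture case (bias-quantification formula, Supplement Section A.6). Let 0 ≤ π ≤ 1, let f₀ be a probability density on ℝ symmetric about zero (f₀(−x) = f₀(x)), let f₁ be a probability density on ℝ, and set f_mix = (1−π)f₀ + π f₁. Let F₀ and F₁ denote the cumulative distribution functions of f₀ and f₁. Let T and T⁰ be independent real random variables with densities f_mix and f₀ respectively, and define the filtered variable T̃⁰ = T if |T| ≤ |T⁰| and T̃⁰ = T⁰ otherwise. Define ξ(x) = π(1 − F₁(x) + F₁(−x)) + 2(1−π)(1 − F₀(x)). Then T̃⁰ has Lebesgue density given (for almost every x) by: f_{T̃⁰}(x) = 2(1 − F₀(x)) f_mix(x) + f₀(x) ξ(x) for x ≥ 0, and f_{T̃⁰}(x) = 2 F₀(x) f_mix(x) + f₀(x) ξ(−x) for x < 0. -/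

import Mathlib

open MeasureTheory ProbabilityTheory
open scoped Classical

open Set

lemma aux_wd_apply (f : ℝ → ℝ) (hfi : Integrable f) (hfnn : ∀ x, 0 ≤ f x)
    {s : Set ℝ} (hs : MeasurableSet s) :
    (volume.withDensity fun x => ENNReal.ofReal (f x)) s
      = ENNReal.ofReal (∫ x in s, f x) := by
  rw [withDensity_apply _ hs,
    ← ofReal_integral_eq_lintegral_ofReal hfi.restrict (ae_of_all _ hfnn)]

lemma aux_integral_Ici (f : ℝ → ℝ) (hfi : Integrable f) (a : ℝ) :
    ∫ x in Ici a, f x = (∫ x, f x) - ∫ x in Iic a, f x := by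
  rw [integral_Ici_eq_integral_Ioi]
  have := intervalIntegral.integral_Iic_add_Ioi (b := a) (μ := volume)
    hfi.integrableOn hfi.integrableOn
  linarith

lemma aux_tail_lt (f : ℝ → ℝ) (hfi : Integrable f) (hfnn : ∀ x, 0 ≤ f x)
    {a : ℝ} (ha : 0 ≤ a) :
    (volume.withDensity fun x => ENNReal.ofReal (f x)) {y : ℝ | a < |y|}
      = ENNReal.ofReal (∫ x in Iic (-a), f x) + ENNReal.ofReal (∫ x in Ici a, f x) := by
  have hset : {y : ℝ | a < |y|} = Iio (-a) ∪ Ioi a := by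
    ext y
    simp only [mem_setOf_eq, lt_abs, mem_union, mem_Iio, mem_Ioi]
    constructor
    · rintro (h | h)
      · right; exact h
      · left; linarith
    · rintro (h | h)
      · right; linarith
      · left; exact h
  have hdisj : Disjoint (Iio (-a)) (Ioi a) := by
    rw [Set.disjoint_left]
    intro x hx hx'
    simp only [mem_Iio, mem_Ioi] at hx hx'
    linarith
  rw [hset, measure_union hdisj measurableSet_Ioi,
    aux_wd_apply f hfi hfnn measurableSet_Iio,
    aux_wd_apply f hfi hfnn measurableSet_Ioi,
    ← integral_Iic_eq_integral_Iio, ← integral_Ici_eq_integral_Ioi]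

lemma aux_tail_le (f : ℝ → ℝ) (hfi : Integrable f) (hfnn : ∀ x, 0 ≤ f x)
    {a : ℝ} (ha : 0 ≤ a) :
    (volume.withDensity fun x => ENNReal.ofReal (f x)) {y : ℝ | a ≤ |y|}
      = ENNReal.ofReal (∫ x in Iic (-a), f x) + ENNReal.ofReal (∫ x in Ici a, f x) := by
  rw [← aux_tail_lt f hfi hfnn ha]
  apply measure_congr
  rw [Filter.eventuallyEq_set]
  have hnull : (volume : Measure ℝ) ({a, -a} : Set ℝ) = 0 :=
    (((Set.countable_singleton (-a)).insert a)).measure_zero _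
  have hae : ∀ᵐ y : ℝ, y ≠ a ∧ y ≠ -a := by
    rw [ae_iff]
    have : {y : ℝ | ¬(y ≠ a ∧ y ≠ -a)} = ({a, -a} : Set ℝ) := by
      ext y; simp [not_and_or]; tauto
    rw [this]; exact hnull
  filter_upwards [(withDensity_absolutelyContinuous (volume : Measure ℝ)
    (fun x => ENNReal.ofReal (f x))).ae_le hae] with y hy
  constructor
  · intro h
    rcases h.lt_or_eq with h' | h'
    · exact h'
    · exfalso
      rcases (abs_eq ha).mp h'.symm with h'' | h''
      · exact hy.1 h''
      · exact hy.2 h''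
  · exact le_of_lt

/-- **Density of the filtered calibration sample in the mixture case
(bias-quantification formula, Supplement Section A.6).**
If `T ∼ f_mix = (1−π) f₀ + π f₁` and `T⁰ ∼ f₀` are independent, `f₀` symmetric about
zero, and `T̃⁰ = T` when `|T| ≤ |T⁰|` and `T̃⁰ = T⁰` otherwise, then `T̃⁰` has Lebesgue
density `2(1 − F₀(x)) f_mix(x) + f₀(x) ξ(x)` for `x ≥ 0` and
`2 F₀(x) f_mix(x) + f₀(x) ξ(−x)` for `x < 0`, where
`ξ(x) = π(1 − F₁(x) + F₁(−x)) + 2(1−π)(1 − F₀(x))`. -/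
theorem filtered_sample_density_mixture
    {Ω : Type*} [MeasurableSpace Ω] (P : Measure Ω) [IsProbabilityMeasure P]
    (pi : ℝ) (hpi : pi ∈ Set.Icc (0 : ℝ) 1)
    (f₀ f₁ : ℝ → ℝ)
    (hf₀meas : Measurable f₀) (hf₁meas : Measurable f₁)
    (hf₀nn : ∀ x, 0 ≤ f₀ x) (hf₁nn : ∀ x, 0 ≤ f₁ x)
    (hf₀int : ∫ x, f₀ x = 1) (hf₁int : ∫ x, f₁ x = 1)
    (hf₀symm : ∀ x, f₀ (-x) = f₀ x)
    (F₀ F₁ : ℝ → ℝ)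
    (hF₀ : ∀ x, F₀ x = ∫ u in Set.Iic x, f₀ u)
    (hF₁ : ∀ x, F₁ x = ∫ u in Set.Iic x, f₁ u)
    (fmix : ℝ → ℝ) (hfmix : ∀ x, fmix x = (1 - pi) * f₀ x + pi * f₁ x)
    (T T0 : Ω → ℝ) (hTmeas : Measurable T) (hT0meas : Measurable T0)
    (hindep : IndepFun T T0 P)
    (hTlaw : Measure.map T P
      = (volume : Measure ℝ).withDensity fun x => ENNReal.ofReal (fmix x))
    (hT0law : Measure.map T0 P
      = (volume : Measure ℝ).withDensity fun x => ENNReal.ofReal (f₀ x))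
    (Ttilde : Ω → ℝ)
    (hTtilde : ∀ ω, Ttilde ω = if |T ω| ≤ |T0 ω| then T ω else T0 ω)
    (ξ : ℝ → ℝ)
    (hξ : ∀ x, ξ x = pi * (1 - F₁ x + F₁ (-x)) + 2 * (1 - pi) * (1 - F₀ x)) :
    Measure.map Ttilde P
      = (volume : Measure ℝ).withDensity fun x => ENNReal.ofReal
          (if 0 ≤ x then 2 * (1 - F₀ x) * fmix x + f₀ x * ξ x
           else 2 * F₀ x * fmix x + f₀ x * ξ (-x)) := by
  obtain ⟨hpi0, hpi1⟩ := hpi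
  -- integrability
  have hf₀i : Integrable f₀ := by
    by_contra h
    rw [integral_undef h] at hf₀int; norm_num at hf₀int
  have hf₁i : Integrable f₁ := by
    by_contra h
    rw [integral_undef h] at hf₁int; norm_num at hf₁int
  have hfmixfun : fmix = fun x => (1 - pi) * f₀ x + pi * f₁ x := funext hfmix
  have hfmixmeas : Measurable fmix := by
    rw [hfmixfun]; exact (hf₀meas.const_mul _).add (hf₁meas.const_mul _)
  have hfmixi : Integrable fmix := by
    rw [hfmixfun]; exact (hf₀i.const_mul _).add (hf₁i.const_mul _)
  have hfmixnn : ∀ x, 0 ≤ fmix x := by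
    intro x; rw [hfmix]
    have := hf₀nn x; have := hf₁nn x
    nlinarith
  -- CDF facts
  have hF₀le : ∀ a, F₀ a ≤ 1 := fun a => by
    rw [hF₀, ← hf₀int]
    exact setIntegral_le_integral hf₀i (ae_of_all _ hf₀nn)
  have hF₀nn : ∀ a, 0 ≤ F₀ a := fun a => by
    rw [hF₀]; exact setIntegral_nonneg measurableSet_Iic fun x _ => hf₀nn x
  have hF₁le : ∀ a, F₁ a ≤ 1 := fun a => by
    rw [hF₁, ← hf₁int]
    exact setIntegral_le_integral hf₁i (ae_of_all _ hf₁nn)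
  have hF₁nn : ∀ a, 0 ≤ F₁ a := fun a => by
    rw [hF₁]; exact setIntegral_nonneg measurableSet_Iic fun x _ => hf₁nn x
  have hF₀mono : Monotone F₀ := by
    intro a b hab
    rw [hF₀, hF₀]
    exact setIntegral_mono_set hf₀i.integrableOn (ae_of_all _ hf₀nn)
      (HasSubset.Subset.eventuallyLE (Iic_subset_Iic.2 hab))
  have hF₁mono : Monotone F₁ := by
    intro a b hab
    rw [hF₁, hF₁]
    exact setIntegral_mono_set hf₁i.integrableOn (ae_of_all _ hf₁nn)
      (HasSubset.Subset.eventuallyLE (Iic_subset_Iic.2 hab))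
  have hF₀m : Measurable F₀ := hF₀mono.measurable
  have hF₁m : Measurable F₁ := hF₁mono.measurable
  have hF₀neg : ∀ a, F₀ (-a) = 1 - F₀ a := by
    intro a
    have h1 : ∫ x in Iic (-a), f₀ x = ∫ x in Ioi a, f₀ x := by
      rw [← integral_comp_neg_Ioi]
      exact setIntegral_congr_fun measurableSet_Ioi fun x _ => hf₀symm x
    have h2 := intervalIntegral.integral_Iic_add_Ioi (b := a) (μ := volume)
      hf₀i.integrableOn hf₀i.integrableOn
    rw [hf₀int] at h2
    rw [hF₀, hF₀, h1]
    linarith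
  have hξnn : ∀ a, 0 ≤ ξ a := by
    intro a
    rw [hξ]
    have := hF₁le a; have := hF₁nn (-a); have := hF₀le a
    nlinarith
  have hξm : Measurable ξ := by
    have : ξ = fun a => pi * (1 - F₁ a + F₁ (-a)) + 2 * (1 - pi) * (1 - F₀ a) :=
      funext hξ
    rw [this]
    fun_prop
  -- the two component measures
  set ν : Measure ℝ := volume.withDensity fun x => ENNReal.ofReal (f₀ x) with hνdef
  set μm : Measure ℝ := volume.withDensity fun x => ENNReal.ofReal (fmix x) with hμdef
  haveI hνP : IsProbabilityMeasure ν := by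
    constructor
    rw [hνdef, aux_wd_apply f₀ hf₀i hf₀nn MeasurableSet.univ]
    simp [hf₀int]
  haveI hμP : IsProbabilityMeasure μm := by
    constructor
    rw [hμdef, aux_wd_apply fmix hfmixi hfmixnn MeasurableSet.univ]
    have : ∫ x, fmix x = 1 := by
      rw [hfmixfun, integral_add (hf₀i.const_mul _) (hf₁i.const_mul _),
        integral_const_mul, integral_const_mul, hf₀int, hf₁int]
      ring
    simp [Measure.restrict_univ, this]
  -- joint law
  have hpair : P.map (fun ω => (T ω, T0 ω)) = μm.prod ν := by
    rw [← hTlaw, ← hT0law]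
    exact (indepFun_iff_map_prod_eq_prod_map_map hTmeas.aemeasurable
      hT0meas.aemeasurable).mp hindep
  set φ : ℝ × ℝ → ℝ := fun p => if |p.1| ≤ |p.2| then p.1 else p.2 with hφdef
  have hSmeas : MeasurableSet {p : ℝ × ℝ | |p.1| ≤ |p.2|} :=
    measurableSet_le measurable_fst.abs measurable_snd.abs
  have hφ : Measurable φ := Measurable.ite hSmeas measurable_fst measurable_snd
  have hmap : Measure.map Ttilde P = Measure.map φ (μm.prod ν) := by
    rw [← hpair, Measure.map_map hφ (hTmeas.prodMk hT0meas)]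
    congr 1
    funext ω
    simp only [Function.comp_apply, hφdef, hTtilde ω]
  -- slice measures
  have hslice1 : ∀ a : ℝ, 0 ≤ a → ν {y : ℝ | a ≤ |y|} = ENNReal.ofReal (2 * (1 - F₀ a)) := by
    intro a ha
    rw [hνdef, aux_tail_le f₀ hf₀i hf₀nn ha]
    have e1 : ∫ x in Iic (-a), f₀ x = 1 - F₀ a := by rw [← hF₀, hF₀neg]
    have e2 : ∫ x in Ici a, f₀ x = 1 - F₀ a := by
      rw [aux_integral_Ici f₀ hf₀i a, hf₀int, ← hF₀]
    rw [e1, e2, ← ENNReal.ofReal_add (by linarith [hF₀le a]) (by linarith [hF₀le a])]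
    congr 1
    ring
  have hmixtotal : ∫ x, fmix x = 1 := by
    rw [hfmixfun, integral_add (hf₀i.const_mul _) (hf₁i.const_mul _),
      integral_const_mul, integral_const_mul, hf₀int, hf₁int]
    ring
  have hIicmix : ∀ c : ℝ, ∫ x in Iic c, fmix x = (1 - pi) * F₀ c + pi * F₁ c := by
    intro c
    rw [hF₀, hF₁, hfmixfun,
      integral_add ((hf₀i.const_mul _).integrableOn) ((hf₁i.const_mul _).integrableOn),
      integral_const_mul, integral_const_mul]
  have hslice2 : ∀ a : ℝ, 0 ≤ a → μm {x : ℝ | a < |x|} = ENNReal.ofReal (ξ a) := by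
    intro a ha
    rw [hμdef, aux_tail_lt fmix hfmixi hfmixnn ha]
    rw [aux_integral_Ici fmix hfmixi a, hmixtotal, hIicmix, hIicmix]
    have hA : 0 ≤ (1 - pi) * F₀ (-a) + pi * F₁ (-a) := by
      have := hF₀nn (-a); have := hF₁nn (-a); nlinarith
    have hB : 0 ≤ 1 - ((1 - pi) * F₀ a + pi * F₁ a) := by
      have := hF₀le a; have := hF₁le a; nlinarith
    rw [← ENNReal.ofReal_add hA hB]
    congr 1
    rw [hξ, hF₀neg]
    ring
  -- decompose the pushforward
  refine Measure.ext fun s hs => ?_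
  rw [hmap, Measure.map_apply hφ hs, withDensity_apply _ hs]
  have hpre : φ ⁻¹' s = ({p : ℝ × ℝ | |p.1| ≤ |p.2|} ∩ Prod.fst ⁻¹' s)
      ∪ ({p : ℝ × ℝ | |p.1| ≤ |p.2|}ᶜ ∩ Prod.snd ⁻¹' s) := by
    ext p
    by_cases h : |p.1| ≤ |p.2| <;> simp [hφdef, h]
  have hm1 : MeasurableSet ({p : ℝ × ℝ | |p.1| ≤ |p.2|} ∩ Prod.fst ⁻¹' s) :=
    hSmeas.inter (measurable_fst hs)
  have hm2 : MeasurableSet ({p : ℝ × ℝ | |p.1| ≤ |p.2|}ᶜ ∩ Prod.snd ⁻¹' s) :=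
    hSmeas.compl.inter (measurable_snd hs)
  have hdisj : Disjoint ({p : ℝ × ℝ | |p.1| ≤ |p.2|} ∩ Prod.fst ⁻¹' s)
      ({p : ℝ × ℝ | |p.1| ≤ |p.2|}ᶜ ∩ Prod.snd ⁻¹' s) :=
    disjoint_compl_right.mono inter_subset_left inter_subset_left
  rw [hpre, measure_union hdisj hm2]
  -- first piece
  have h1 : (μm.prod ν) ({p : ℝ × ℝ | |p.1| ≤ |p.2|} ∩ Prod.fst ⁻¹' s)
      = ∫⁻ x in s, ENNReal.ofReal (2 * (1 - F₀ |x|)) ∂μm := by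
    rw [Measure.prod_apply hm1, ← lintegral_indicator hs]
    refine lintegral_congr fun x => ?_
    by_cases hx : x ∈ s
    · have : Prod.mk x ⁻¹' ({p : ℝ × ℝ | |p.1| ≤ |p.2|} ∩ Prod.fst ⁻¹' s)
          = {y : ℝ | |x| ≤ |y|} := by
        ext y; simp [hx]
      rw [this, hslice1 |x| (abs_nonneg x), indicator_of_mem hx]
    · have : Prod.mk x ⁻¹' ({p : ℝ × ℝ | |p.1| ≤ |p.2|} ∩ Prod.fst ⁻¹' s)
          = (∅ : Set ℝ) := by
        ext y; simp [hx]
      rw [this, measure_empty, indicator_of_notMem hx]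
  -- second piece
  have h2 : (μm.prod ν) ({p : ℝ × ℝ | |p.1| ≤ |p.2|}ᶜ ∩ Prod.snd ⁻¹' s)
      = ∫⁻ y in s, ENNReal.ofReal (ξ |y|) ∂ν := by
    rw [Measure.prod_apply_symm hm2, ← lintegral_indicator hs]
    refine lintegral_congr fun y => ?_
    by_cases hy : y ∈ s
    · have : (fun x => (x, y)) ⁻¹' ({p : ℝ × ℝ | |p.1| ≤ |p.2|}ᶜ ∩ Prod.snd ⁻¹' s)
          = {x : ℝ | |y| < |x|} := by
        ext x; simp [hy, not_le]
      rw [this, hslice2 |y| (abs_nonneg y), indicator_of_mem hy]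
    · have : (fun x => (x, y)) ⁻¹' ({p : ℝ × ℝ | |p.1| ≤ |p.2|}ᶜ ∩ Prod.snd ⁻¹' s)
          = (∅ : Set ℝ) := by
        ext x; simp [hy]
      rw [this, measure_empty, indicator_of_notMem hy]
  rw [h1, h2]
  -- rewrite the two integrals against Lebesgue measure
  have hg1 : Measurable fun x : ℝ => ENNReal.ofReal (2 * (1 - F₀ |x|)) := by fun_prop
  have hg2 : Measurable fun x : ℝ => ENNReal.ofReal (ξ |x|) := by fun_prop
  have hd1 : Measurable fun x : ℝ => ENNReal.ofReal (fmix x) := by fun_prop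
  have hd2 : Measurable fun x : ℝ => ENNReal.ofReal (f₀ x) := by fun_prop
  have e1 : ∫⁻ x in s, ENNReal.ofReal (2 * (1 - F₀ |x|)) ∂μm
      = ∫⁻ x in s, ENNReal.ofReal (fmix x) * ENNReal.ofReal (2 * (1 - F₀ |x|)) ∂volume := by
    rw [hμdef, restrict_withDensity hs, lintegral_withDensity_eq_lintegral_mul _ hd1 hg1]
    rfl
  have e2 : ∫⁻ x in s, ENNReal.ofReal (ξ |x|) ∂ν
      = ∫⁻ x in s, ENNReal.ofReal (f₀ x) * ENNReal.ofReal (ξ |x|) ∂volume := by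
    rw [hνdef, restrict_withDensity hs, lintegral_withDensity_eq_lintegral_mul _ hd2 hg2]
    rfl
  rw [e1, e2, ← lintegral_add_left (f := fun x => ENNReal.ofReal (fmix x) * ENNReal.ofReal (2 * (1 - F₀ |x|))) (hd1.mul hg1)]
  refine lintegral_congr fun x => ?_
  have hnn1 : 0 ≤ 2 * (1 - F₀ |x|) := by linarith [hF₀le |x|]
  rw [← ENNReal.ofReal_mul (hfmixnn x), ← ENNReal.ofReal_mul (hf₀nn x),
    ← ENNReal.ofReal_add (mul_nonneg (hfmixnn x) hnn1) (mul_nonneg (hf₀nn x) (hξnn |x|))]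
  congr 1
  rcases le_or_gt 0 x with hx | hx
  · rw [if_pos hx, abs_of_nonneg hx]; ring
  · rw [if_neg (not_le.mpr hx), abs_of_neg hx, hF₀neg]; ring
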